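/- Let C ⊆ ℝ^N be open and convex, λ₁,…,λ_m ∈ (0,1] with ∑λ_k = 1, and points x₁ ≥ x₂ ≥ ⋯ ≥ x_m and y₁,…,y_m in C (componentwise order) satisfying ∑_{k=1}^n λ_k x_k ≤ ∑_{k=1}^n λ_k y_k for all n < m and ∑_{k=1}^m λ_k x_k = ∑_{k=1}^m λ_k y_k. If Φ : C → ℝ is Gâteaux differentiable, convex, and its gradient is isotone, then ∑_{k=1}^m λ_k Φ(y_k) ≥ ∑_{k=1}^m λ_k Φ(x_k). -/

import Mathlib

open Finset

lemma clm_apply_eq_sum {N : ℕ} (L : (Fin N → ℝ) →L[ℝ] ℝ) (v : Fin N → ℝ) :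
    L v = ∑ i, v i * L (Pi.single i 1) := by
  have hv : v = ∑ i, v i • (Pi.single i 1 : Fin N → ℝ) := by
    ext j; simp [Pi.single_apply]
  conv_lhs => rw [hv]
  simp [map_sum]

lemma grad_ineq {N : ℕ} {C : Set (Fin N → ℝ)} {Φ : (Fin N → ℝ) → ℝ}
    (hconv : ConvexOn ℝ C Φ) {a b : Fin N → ℝ} (ha : a ∈ C) (hb : b ∈ C)
    (hdiff : DifferentiableAt ℝ Φ a) :
    fderiv ℝ Φ a (b - a) ≤ Φ b - Φ a := by
  set γ : ℝ →ᵃ[ℝ] (Fin N → ℝ) := AffineMap.lineMap a b with hγ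
  have hcoe : ⇑γ = fun t : ℝ => t • (b - a) + a := by
    ext t; simp [hγ, AffineMap.lineMap_apply]
  have h0 : γ 0 = a := by simp [hcoe]
  have h1 : γ 1 = b := by simp [hcoe]
  have hg : ConvexOn ℝ (γ ⁻¹' C) (Φ ∘ γ) := hconv.comp_affineMap γ
  have hγd : HasDerivAt (⇑γ) (b - a) 0 := by
    rw [hcoe]
    simpa using ((hasDerivAt_id (0:ℝ)).smul_const (b - a)).add_const a
  have hd : HasDerivAt (Φ ∘ ⇑γ) (fderiv ℝ Φ a (b - a)) 0 := by
    have hF : HasFDerivAt Φ (fderiv ℝ Φ a) (γ 0) := by rw [h0]; exact hdiff.hasFDerivAt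
    exact hF.comp_hasDerivAt 0 hγd
  have h01 : (0:ℝ) ∈ γ ⁻¹' C := by simp [Set.mem_preimage, h0, ha]
  have h11 : (1:ℝ) ∈ γ ⁻¹' C := by simp [Set.mem_preimage, h1, hb]
  have := hg.le_slope_of_hasDerivAt h01 h11 one_pos hd
  simpa [slope_def_field, h0, h1] using this

/-- Extension of the Hardy–Littlewood–Pólya majorization inequality (L↓-case) to `ℝ^N`
with the componentwise order: under L↓-majorization, `∑ λₖ Φ(yₖ) ≥ ∑ λₖ Φ(xₖ)` for every
Gâteaux differentiable convex `Φ` with isotone gradient. -/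
theorem stmt12 (N m : ℕ) (C : Set (Fin N → ℝ)) (hCo : IsOpen C) (hCc : Convex ℝ C)
    (w : ℕ → ℝ) (hw : ∀ k < m, 0 < w k ∧ w k ≤ 1)
    (hw1 : ∑ k ∈ Finset.range m, w k = 1)
    (x y : ℕ → Fin N → ℝ) (hxC : ∀ k < m, x k ∈ C) (hyC : ∀ k < m, y k ∈ C)
    (hdec : ∀ i j, i ≤ j → j < m → x j ≤ x i)
    (hmaj : ∀ n < m, ∑ k ∈ Finset.range n, w k • x k ≤ ∑ k ∈ Finset.range n, w k • y k)
    (heq : ∑ k ∈ Finset.range m, w k • x k = ∑ k ∈ Finset.range m, w k • y k)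
    (Φ : (Fin N → ℝ) → ℝ)
    (hdiff : ∀ z ∈ C, DifferentiableAt ℝ Φ z) (hconv : ConvexOn ℝ C Φ)
    (hgrad : ∀ u ∈ C, ∀ v ∈ C, u ≤ v →
      ∀ i : Fin N, fderiv ℝ Φ u (Pi.single i 1) ≤ fderiv ℝ Φ v (Pi.single i 1)) :
    ∑ k ∈ Finset.range m, w k * Φ (x k) ≤ ∑ k ∈ Finset.range m, w k * Φ (y k) := by
  classical
  set S : ℕ → Fin N → ℝ := fun n => ∑ k ∈ range n, (w k • y k - w k • x k) with hSdef
  have hSsub : ∀ n, S n = (∑ k ∈ range n, w k • y k) - ∑ k ∈ range n, w k • x k := by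
    intro n; simp [hSdef, Finset.sum_sub_distrib]
  have hSnn : ∀ n ≤ m, ∀ i, 0 ≤ S n i := by
    intro n hn i
    have h : ∑ k ∈ range n, w k • x k ≤ ∑ k ∈ range n, w k • y k := by
      rcases lt_or_eq_of_le hn with h | h
      · exact hmaj n h
      · subst h; exact le_of_eq heq
    have h2 := sub_nonneg.2 h
    rw [hSsub]
    simpa using h2 i
  have hSm : S m = 0 := by rw [hSsub, heq, sub_self]
  have hS0 : S 0 = 0 := by simp [hSdef]
  have hstepd : ∀ k, w k • y k - w k • x k = S (k+1) - S k := by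
    intro k
    have : S (k+1) = S k + (w k • y k - w k • x k) := Finset.sum_range_succ _ _
    rw [this]; abel
  -- each Abel term is nonneg
  have hterm : ∀ k ∈ range m,
      0 ≤ fderiv ℝ Φ (x k) (S (k+1)) - fderiv ℝ Φ (x (k+1)) (S (k+1)) := by
    intro k hk
    rw [mem_range] at hk
    rcases eq_or_lt_of_le (Nat.succ_le_of_lt hk) with h | h
    · rw [← h] at hSm
      simp [hSm]
    · have hx1 : x (k+1) ≤ x k := hdec k (k+1) (Nat.le_succ k) h
      have hSi : ∀ i, 0 ≤ S (k+1) i := hSnn (k+1) (le_of_lt h)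
      rw [sub_nonneg, clm_apply_eq_sum (fderiv ℝ Φ (x (k+1))), clm_apply_eq_sum (fderiv ℝ Φ (x k))]
      refine Finset.sum_le_sum fun i _ => ?_
      exact mul_le_mul_of_nonneg_left (hgrad (x (k+1)) (hxC _ h) (x k) (hxC k hk) hx1 i) (hSi i)
  have habel : ∑ k ∈ range m, fderiv ℝ Φ (x k) (S (k+1) - S k)
      = (∑ k ∈ range m, (fderiv ℝ Φ (x k) (S (k+1)) - fderiv ℝ Φ (x (k+1)) (S (k+1))))
        + (fderiv ℝ Φ (x m) (S m) - fderiv ℝ Φ (x 0) (S 0)) := by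
    rw [← Finset.sum_range_sub (fun k => fderiv ℝ Φ (x k) (S k)) m, ← Finset.sum_add_distrib]
    refine Finset.sum_congr rfl fun k _ => ?_
    rw [map_sub]; ring
  have hkey : 0 ≤ ∑ k ∈ range m, fderiv ℝ Φ (x k) (w k • y k - w k • x k) := by
    calc (0:ℝ) ≤ ∑ k ∈ range m, (fderiv ℝ Φ (x k) (S (k+1)) - fderiv ℝ Φ (x (k+1)) (S (k+1)))
          + (fderiv ℝ Φ (x m) (S m) - fderiv ℝ Φ (x 0) (S 0)) := by
            rw [hSm, hS0]; simpa using Finset.sum_nonneg hterm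
      _ = ∑ k ∈ range m, fderiv ℝ Φ (x k) (S (k+1) - S k) := habel.symm
      _ = _ := by refine Finset.sum_congr rfl fun k _ => ?_; rw [hstepd]
  have hstep : ∀ k ∈ range m,
      w k * Φ (x k) + fderiv ℝ Φ (x k) (w k • y k - w k • x k) ≤ w k * Φ (y k) := by
    intro k hk
    rw [mem_range] at hk
    have hg := grad_ineq hconv (hxC k hk) (hyC k hk) (hdiff _ (hxC k hk))
    have hwk := (hw k hk).1
    have he : fderiv ℝ Φ (x k) (w k • y k - w k • x k) = w k * fderiv ℝ Φ (x k) (y k - x k) := by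
      rw [← smul_sub, map_smul, smul_eq_mul]
    rw [he]
    nlinarith [mul_le_mul_of_nonneg_left hg (le_of_lt hwk)]
  have hsum := Finset.sum_le_sum hstep
  rw [Finset.sum_add_distrib] at hsum
  linarith [hkey, hsum]
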